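/- Let K be a field of characteristic zero and P, Q ∈ K[X,Y] with Jac(P,Q) := ∂P/∂X · ∂Q/∂Y - ∂P/∂Y · ∂Q/∂X = 1. If β(P) = P and β(Q) = -Q, where β is the algebra involution of K[X,Y] with β(X) = X, β(Y) = -Y, then there exist λ ∈ K* and g ∈ K[Y²] such that Q = λY and P = X/λ + g(Y). -/

import Mathlib

open scoped BigOperators

open MvPolynomial

variable (K : Type*) [Field K]

/-- The Jacobian of a pair of polynomials in two variables. -/
noncomputable def Jac (P Q : MvPolynomial (Fin 2) K) : MvPolynomial (Fin 2) K :=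
  pderiv 0 P * pderiv 1 Q - pderiv 1 P * pderiv 0 Q

/-- The involution `β` of `K[X,Y]` with `β(X) = X`, `β(Y) = -Y`. -/
noncomputable def polyBeta : MvPolynomial (Fin 2) K →ₐ[K] MvPolynomial (Fin 2) K :=
  aeval ![X 0, -X 1]

namespace Stmt15Aux

/-- The exponent finsupp with value `a` at `0` and `b` at `1`. -/
noncomputable def E (a b : ℕ) : Fin 2 →₀ ℕ := Finsupp.single 0 a + Finsupp.single 1 b

@[simp] lemma E_apply0 (a b : ℕ) : E a b 0 = a := by
  simp [E, Finsupp.single_apply]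

@[simp] lemma E_apply1 (a b : ℕ) : E a b 1 = b := by
  simp [E, Finsupp.single_apply]

lemma finsupp_eq_iff (u v : Fin 2 →₀ ℕ) : u = v ↔ u 0 = v 0 ∧ u 1 = v 1 := by
  constructor
  · rintro rfl; exact ⟨rfl, rfl⟩
  · rintro ⟨h0, h1⟩
    ext i
    fin_cases i
    · exact h0
    · exact h1

lemma E_eta (m : Fin 2 →₀ ℕ) : E (m 0) (m 1) = m := by
  rw [finsupp_eq_iff]; simp

lemma E_add (a b c d : ℕ) : E a b + E c d = E (a + c) (b + d) := by
  rw [finsupp_eq_iff]; simp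

lemma E_eq_zero_iff (a b : ℕ) : E a b = 0 ↔ a = 0 ∧ b = 0 := by
  rw [finsupp_eq_iff]; simp

end Stmt15Aux
section Chunk2
open Stmt15Aux
variable {K : Type*} [Field K]

lemma polyBeta_monomial (m : Fin 2 →₀ ℕ) (c : K) :
    polyBeta K (monomial m c) = monomial m ((-1) ^ (m 1) * c) := by
  rw [polyBeta, aeval_monomial]
  rw [Finsupp.prod_fintype _ _ (fun i => pow_zero _)]
  rw [Fin.prod_univ_two]
  simp only [Matrix.cons_val_zero, Matrix.cons_val_one, Matrix.head_cons]
  rw [neg_pow (X 1 : MvPolynomial (Fin 2) K) (m 1)]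
  rw [monomial_eq, Finsupp.prod_fintype _ _ (fun i => pow_zero _), Fin.prod_univ_two]
  simp only [algebraMap_eq, map_mul, map_pow, map_neg, map_one]
  ring

lemma coeff_polyBeta (R : MvPolynomial (Fin 2) K) (m : Fin 2 →₀ ℕ) :
    coeff m (polyBeta K R) = (-1) ^ (m 1) * coeff m R := by
  conv_lhs => rw [R.as_sum]
  rw [map_sum, coeff_sum]
  simp only [polyBeta_monomial, coeff_monomial]
  rw [Finset.sum_eq_single m]
  · simp
  · intro b _ hb; simp [hb]
  · intro h; simp [MvPolynomial.notMem_support_iff.mp h]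

lemma parity_P {P : MvPolynomial (Fin 2) K} [CharZero K] (hP : polyBeta K P = P)
    {m : Fin 2 →₀ ℕ} (hm : Odd (m 1)) : coeff m P = 0 := by
  have h := coeff_polyBeta P m
  rw [hP, hm.neg_one_pow] at h
  have h2 : (2 : K) * coeff m P = 0 := by linear_combination h
  rcases mul_eq_zero.mp h2 with h3 | h3
  · exact absurd h3 two_ne_zero
  · exact h3

lemma parity_Q {Q : MvPolynomial (Fin 2) K} [CharZero K] (hQ : polyBeta K Q = -Q)
    {m : Fin 2 →₀ ℕ} (hm : Even (m 1)) : coeff m Q = 0 := by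
  have h := coeff_polyBeta Q m
  rw [hQ, hm.neg_one_pow] at h
  simp only [coeff_neg, one_mul] at h
  have h2 : (2 : K) * coeff m Q = 0 := by linear_combination -h
  rcases mul_eq_zero.mp h2 with h3 | h3
  · exact absurd h3 two_ne_zero
  · exact h3

end Chunk2
section Chunk3
open Stmt15Aux
variable {K : Type*} [Field K]

/-- The "determinant" coefficient in `K`. -/
noncomputable def detK (m n : Fin 2 →₀ ℕ) : K :=
  ((m 0 * n 1 : ℕ) : K) - ((m 1 * n 0 : ℕ) : K)

lemma jac_mono_coeff (m n u : Fin 2 →₀ ℕ) (c e : K) :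
    coeff u (Jac K (monomial m c) (monomial n e)) =
      if m + n = u + E 1 1 then c * e * detK m n else 0 := by
  have hne01 : (0 : Fin 2) ≠ 1 := by decide
  have hne10 : (1 : Fin 2) ≠ 0 := by decide
  have e1 : ((m - Finsupp.single 0 1) + (n - Finsupp.single 1 1) = u) ↔
      (m 0 - 1 + n 0 = u 0 ∧ m 1 + (n 1 - 1) = u 1) := by
    rw [finsupp_eq_iff]
    simp [Finsupp.tsub_apply, Finsupp.single_eq_of_ne hne01, Finsupp.single_eq_of_ne hne10]
  have e2 : ((m - Finsupp.single 1 1) + (n - Finsupp.single 0 1) = u) ↔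
      (m 0 + (n 0 - 1) = u 0 ∧ m 1 - 1 + n 1 = u 1) := by
    rw [finsupp_eq_iff]
    simp [Finsupp.tsub_apply, Finsupp.single_eq_of_ne hne01, Finsupp.single_eq_of_ne hne10]
  have emain : (m + n = u + E 1 1) ↔ (m 0 + n 0 = u 0 + 1 ∧ m 1 + n 1 = u 1 + 1) := by
    rw [finsupp_eq_iff]; simp
  rw [Jac]
  simp only [pderiv_monomial, monomial_mul, coeff_sub, coeff_monomial]
  by_cases hmain : m 0 + n 0 = u 0 + 1 ∧ m 1 + n 1 = u 1 + 1
  · rw [if_pos (emain.mpr hmain)]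
    obtain ⟨hs0, hs1⟩ := hmain
    by_cases hm : 1 ≤ m 0 ∧ 1 ≤ n 1
    · rw [if_pos (e1.mpr ⟨by omega, by omega⟩)]
      by_cases hn : 1 ≤ m 1 ∧ 1 ≤ n 0
      · rw [if_pos (e2.mpr ⟨by omega, by omega⟩)]
        rw [detK]; push_cast; ring
      · rw [if_neg (fun hc => by have h := e2.mp hc; omega)]
        rw [detK, show m 1 * n 0 = 0 from Nat.mul_eq_zero.mpr (by omega)]
        push_cast; ring
    · rw [if_neg (fun hc => by have h := e1.mp hc; omega)]
      by_cases hn : 1 ≤ m 1 ∧ 1 ≤ n 0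
      · rw [if_pos (e2.mpr ⟨by omega, by omega⟩)]
        rw [detK, show m 0 * n 1 = 0 from Nat.mul_eq_zero.mpr (by omega)]
        push_cast; ring
      · rw [if_neg (fun hc => by have h := e2.mp hc; omega)]
        rw [detK, show m 0 * n 1 = 0 from Nat.mul_eq_zero.mpr (by omega), show m 1 * n 0 = 0 from Nat.mul_eq_zero.mpr (by omega)]
        push_cast; ring
  · rw [if_neg (fun hc => hmain (emain.mp hc))]
    have t1 : (if (m - Finsupp.single 0 1) + (n - Finsupp.single 1 1) = u
        then c * (m 0 : K) * (e * (n 1 : K)) else 0) = 0 := by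
      by_cases hc1 : (m - Finsupp.single 0 1) + (n - Finsupp.single 1 1) = u
      · have hn := e1.mp hc1
        rcases Nat.eq_zero_or_pos (m 0) with h | h
        · rw [if_pos hc1, h]; push_cast; ring
        rcases Nat.eq_zero_or_pos (n 1) with h' | h'
        · rw [if_pos hc1, h']; push_cast; ring
        · exact absurd (⟨by omega, by omega⟩ : m 0 + n 0 = u 0 + 1 ∧ m 1 + n 1 = u 1 + 1) hmain
      · rw [if_neg hc1]
    have t2 : (if (m - Finsupp.single 1 1) + (n - Finsupp.single 0 1) = u
        then c * (m 1 : K) * (e * (n 0 : K)) else 0) = 0 := by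
      by_cases hc2 : (m - Finsupp.single 1 1) + (n - Finsupp.single 0 1) = u
      · have hn := e2.mp hc2
        rcases Nat.eq_zero_or_pos (m 1) with h | h
        · rw [if_pos hc2, h]; push_cast; ring
        rcases Nat.eq_zero_or_pos (n 0) with h' | h'
        · rw [if_pos hc2, h']; push_cast; ring
        · exact absurd (⟨by omega, by omega⟩ : m 0 + n 0 = u 0 + 1 ∧ m 1 + n 1 = u 1 + 1) hmain
      · rw [if_neg hc2]
    rw [t1, t2, sub_zero]

end Chunk3
section Chunk4
open Stmt15Aux
variable {K : Type*} [Field K]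

lemma jac_sum_sum (s t : Finset (Fin 2 →₀ ℕ)) (f g : (Fin 2 →₀ ℕ) → MvPolynomial (Fin 2) K) :
    Jac K (∑ m ∈ s, f m) (∑ n ∈ t, g n) = ∑ m ∈ s, ∑ n ∈ t, Jac K (f m) (g n) := by
  rw [Jac]
  simp only [map_sum]
  rw [Finset.sum_mul_sum, Finset.sum_mul_sum, ← Finset.sum_sub_distrib]
  refine Finset.sum_congr rfl fun m _ => ?_
  rw [← Finset.sum_sub_distrib]
  rfl

lemma jac_coeff (P Q : MvPolynomial (Fin 2) K) (u : Fin 2 →₀ ℕ) :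
    coeff u (Jac K P Q) = ∑ m ∈ P.support, ∑ n ∈ Q.support,
      if m + n = u + E 1 1 then coeff m P * coeff n Q * detK m n else 0 := by
  conv_lhs => rw [P.as_sum, Q.as_sum]
  rw [jac_sum_sum, coeff_sum]
  refine Finset.sum_congr rfl fun m _ => ?_
  rw [coeff_sum]
  refine Finset.sum_congr rfl fun n _ => ?_
  rw [jac_mono_coeff]

lemma jac_coeff_single' (P Q : MvPolynomial (Fin 2) K) (u m₀ n₀ : Fin 2 →₀ ℕ)
    (hsum : m₀ + n₀ = u + E 1 1)
    (huniq : ∀ m ∈ P.support, ∀ n ∈ Q.support, m + n = u + E 1 1 →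
      (m = m₀ ∧ n = n₀) ∨ detK m n = (0 : K)) :
    coeff u (Jac K P Q) = coeff m₀ P * coeff n₀ Q * detK m₀ n₀ := by
  rw [jac_coeff]
  by_cases hm₀ : m₀ ∈ P.support
  · by_cases hn₀ : n₀ ∈ Q.support
    · rw [Finset.sum_eq_single_of_mem m₀ hm₀]
      · rw [Finset.sum_eq_single_of_mem n₀ hn₀, if_pos hsum]
        intro n hn hne
        by_cases hc : m₀ + n = u + E 1 1
        · rcases huniq m₀ hm₀ n hn hc with ⟨_, h⟩ | h
          · exact absurd h hne
          · rw [if_pos hc, h, mul_zero]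
        · rw [if_neg hc]
      · intro m hm hne
        apply Finset.sum_eq_zero
        intro n hn
        by_cases hc : m + n = u + E 1 1
        · rcases huniq m hm n hn hc with ⟨h, _⟩ | h
          · exact absurd h hne
          · rw [if_pos hc, h, mul_zero]
        · rw [if_neg hc]
    · rw [MvPolynomial.notMem_support_iff.mp hn₀]
      rw [mul_zero, zero_mul]
      apply Finset.sum_eq_zero; intro m hm
      apply Finset.sum_eq_zero; intro n hn
      by_cases hc : m + n = u + E 1 1
      · rcases huniq m hm n hn hc with ⟨_, h⟩ | h
        · exact absurd (h ▸ hn) hn₀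
        · rw [if_pos hc, h, mul_zero]
      · rw [if_neg hc]
  · rw [MvPolynomial.notMem_support_iff.mp hm₀]
    rw [zero_mul, zero_mul]
    apply Finset.sum_eq_zero; intro m hm
    apply Finset.sum_eq_zero; intro n hn
    by_cases hc : m + n = u + E 1 1
    · rcases huniq m hm n hn hc with ⟨h, _⟩ | h
      · exact absurd (h ▸ hm) hm₀
      · rw [if_pos hc, h, mul_zero]
    · rw [if_neg hc]

end Chunk4
section Chunk5
open Stmt15Aux
variable {K : Type*} [Field K]

lemma addeq_nat {m n u : Fin 2 →₀ ℕ} (h : m + n = u + E 1 1) :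
    m 0 + n 0 = u 0 + 1 ∧ m 1 + n 1 = u 1 + 1 := by
  have h' := (finsupp_eq_iff _ _).mp h
  simpa using h'

lemma eq_E {m : Fin 2 →₀ ℕ} {a b : ℕ} (h0 : m 0 = a) (h1 : m 1 = b) : m = E a b := by
  rw [finsupp_eq_iff]; simp [h0, h1]

lemma detK_E (a b c d : ℕ) : (detK (E a b) (E c d) : K) = ((a * d : ℕ) : K) - ((b * c : ℕ) : K) := by
  simp [detK]

lemma detK_eq_zero {m n : Fin 2 →₀ ℕ} (h : m 0 * n 1 = m 1 * n 0) : detK m n = (0 : K) := by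
  rw [detK, h, sub_self]

variable [CharZero K] {P Q : MvPolynomial (Fin 2) K}

lemma hPev (hP : polyBeta K P = P) : ∀ m ∈ P.support, m 1 % 2 = 0 := by
  intro m hm
  rcases Nat.even_or_odd (m 1) with h | h
  · exact Nat.even_iff.mp h
  · exact absurd (parity_P hP h) (MvPolynomial.mem_support_iff.mp hm)

lemma hQodd (hQ : polyBeta K Q = -Q) : ∀ n ∈ Q.support, n 1 % 2 = 1 := by
  intro n hn
  rcases Nat.even_or_odd (n 1) with h | h
  · exact absurd (parity_Q hQ h) (MvPolynomial.mem_support_iff.mp hn)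
  · exact Nat.odd_iff.mp h

/-- Step 1 : the product of the two distinguished linear coefficients is 1. -/
lemma step1 (hJ : Jac K P Q = 1) (hP : polyBeta K P = P) (hQ : polyBeta K Q = -Q) :
    coeff (E 1 0) P * coeff (E 0 1) Q = 1 := by
  have key := jac_coeff_single' P Q 0 (E 1 0) (E 0 1) (by rw [finsupp_eq_iff]; simp)
    (by
      intro m hm n hn hc
      obtain ⟨hc0, hc1⟩ := addeq_nat hc
      simp only [Finsupp.coe_zero, Pi.zero_apply] at hc0 hc1
      have hme := hPev hP m hm
      have hno := hQodd hQ n hn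
      have hm1 : m 1 = 0 := by omega
      have hn1 : n 1 = 1 := by omega
      rcases Nat.lt_or_ge (m 0) 1 with h | h
      · right
        have hm0 : m 0 = 0 := by omega
        exact detK_eq_zero (by rw [hm0, hm1, zero_mul, zero_mul])
      · left
        have hm0 : m 0 = 1 := by omega
        have hn0 : n 0 = 0 := by omega
        exact ⟨eq_E hm0 hm1, eq_E hn0 hn1⟩)
  rw [hJ, coeff_zero_one, detK_E] at key
  have hd : ((1 * 1 : ℕ) : K) - ((0 * 0 : ℕ) : K) = 1 := by norm_num
  rw [hd, mul_one] at key
  exact key.symm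

/-- Step 2 : `coeff (E a 0) P = 0` for `a ≥ 2` and `coeff (E c 1) Q = 0` for `c ≥ 1`. -/
lemma step2 (hJ : Jac K P Q = 1) (hP : polyBeta K P = P) (hQ : polyBeta K Q = -Q) :
    (∀ a, 2 ≤ a → coeff (E a 0) P = 0) ∧ (∀ c, 1 ≤ c → coeff (E c 1) Q = 0) := by
  have h1 := step1 hJ hP hQ
  have hm10 : E 1 0 ∈ P.support := by
    rw [MvPolynomial.mem_support_iff]
    intro h; rw [h, zero_mul] at h1; exact zero_ne_one h1
  have hn01 : E 0 1 ∈ Q.support := by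
    rw [MvPolynomial.mem_support_iff]
    intro h; rw [h, mul_zero] at h1; exact zero_ne_one h1
  set SA := (P.support.filter (fun m => m 1 = 0)).image (fun m => m 0) with hSA
  have hSAmem1 : (1 : ℕ) ∈ SA := by
    rw [hSA, Finset.mem_image]
    exact ⟨E 1 0, Finset.mem_filter.mpr ⟨hm10, by simp⟩, by simp⟩
  have hSAne : SA.Nonempty := ⟨1, hSAmem1⟩
  set A := SA.max' hSAne with hA
  have hA1 : 1 ≤ A := Finset.le_max' _ 1 hSAmem1
  have hAub : ∀ m ∈ P.support, m 1 = 0 → m 0 ≤ A := by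
    intro m hm hm1
    refine Finset.le_max' SA _ ?_
    rw [hSA, Finset.mem_image]
    exact ⟨m, Finset.mem_filter.mpr ⟨hm, hm1⟩, rfl⟩
  have hAmem : E A 0 ∈ P.support := by
    obtain ⟨m, hm, hm0⟩ := Finset.mem_image.mp (SA.max'_mem hSAne)
    obtain ⟨hms, hm1⟩ := Finset.mem_filter.mp hm
    rwa [← eq_E hm0 hm1]
  set SB := (Q.support.filter (fun n => n 1 = 1)).image (fun n => n 0) with hSB
  have hSBmem0 : (0 : ℕ) ∈ SB := by
    rw [hSB, Finset.mem_image]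
    exact ⟨E 0 1, Finset.mem_filter.mpr ⟨hn01, by simp⟩, by simp⟩
  have hSBne : SB.Nonempty := ⟨0, hSBmem0⟩
  set B := SB.max' hSBne with hB
  have hBub : ∀ n ∈ Q.support, n 1 = 1 → n 0 ≤ B := by
    intro n hn hn1
    refine Finset.le_max' SB _ ?_
    rw [hSB, Finset.mem_image]
    exact ⟨n, Finset.mem_filter.mpr ⟨hn, hn1⟩, rfl⟩
  have hBmem : E B 1 ∈ Q.support := by
    obtain ⟨n, hn, hn0⟩ := Finset.mem_image.mp (SB.max'_mem hSBne)
    obtain ⟨hns, hn1⟩ := Finset.mem_filter.mp hn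
    rwa [← eq_E hn0 hn1]
  have key := jac_coeff_single' P Q (E (A + B - 1) 0) (E A 0) (E B 1)
    (by rw [finsupp_eq_iff]; constructor <;> simp <;> omega)
    (by
      intro m hm n hn hc
      obtain ⟨hc0, hc1⟩ := addeq_nat hc
      simp only [E_apply0, E_apply1] at hc0 hc1
      have hme := hPev hP m hm
      have hno := hQodd hQ n hn
      have hm1 : m 1 = 0 := by omega
      have hn1 : n 1 = 1 := by omega
      have hmo := hAub m hm hm1
      have hno' := hBub n hn hn1
      have hm0 : m 0 = A := by omega
      have hn0 : n 0 = B := by omega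
      exact Or.inl ⟨eq_E hm0 hm1, eq_E hn0 hn1⟩)
  rw [hJ, coeff_one, detK_E] at key
  have hAB : A + B - 1 = 0 := by
    by_contra hne
    have hzero : (0 : Fin 2 →₀ ℕ) ≠ E (A + B - 1) 0 := by
      intro h
      have := (finsupp_eq_iff _ _).mp h
      simp at this
      omega
    rw [if_neg hzero] at key
    have hAne : coeff (E A 0) P ≠ 0 := MvPolynomial.mem_support_iff.mp hAmem
    have hBne : coeff (E B 1) Q ≠ 0 := MvPolynomial.mem_support_iff.mp hBmem
    have hcast : ((A * 1 : ℕ) : K) - ((0 * B : ℕ) : K) ≠ 0 := by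
      simp only [mul_one, zero_mul, Nat.cast_zero, sub_zero]
      exact Nat.cast_ne_zero.mpr (by omega)
    exact (mul_ne_zero (mul_ne_zero hAne hBne) hcast) key.symm
  have hAeq : A = 1 := by omega
  have hBeq : B = 0 := by omega
  constructor
  · intro a ha
    by_contra hne
    have : a ∈ SA := by
      rw [hSA, Finset.mem_image]
      exact ⟨E a 0, Finset.mem_filter.mpr ⟨MvPolynomial.mem_support_iff.mpr hne, by simp⟩, by simp⟩
    have := Finset.le_max' _ _ this
    omega
  · intro c hc
    by_contra hne
    have : c ∈ SB := by
      rw [hSB, Finset.mem_image]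
      exact ⟨E c 1, Finset.mem_filter.mpr ⟨MvPolynomial.mem_support_iff.mpr hne, by simp⟩, by simp⟩
    have := Finset.le_max' _ _ this
    omega

end Chunk5
section Chunk6
open Stmt15Aux
variable {K : Type*} [Field K]

/-- Integer weight function. -/
def Wt (A B : ℕ) (m : Fin 2 →₀ ℕ) : ℤ := (B : ℤ) * (m 0 : ℤ) + (1 - (A : ℤ)) * (m 1 : ℤ)

variable [CharZero K] {P Q : MvPolynomial (Fin 2) K}

set_option maxHeartbeats 1000000 in
/-- Step 3 : `P` has degree at most 1 in `X`. -/
lemma step3 (hJ : Jac K P Q = 1) (hP : polyBeta K P = P) (hQ : polyBeta K Q = -Q) :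
    ∀ m ∈ P.support, m 0 ≤ 1 := by
  have h1 := step1 hJ hP hQ
  obtain ⟨hR0, hR1⟩ := step2 hJ hP hQ
  have hm10 : E 1 0 ∈ P.support := by
    rw [MvPolynomial.mem_support_iff]
    intro h; rw [h, zero_mul] at h1; exact zero_ne_one h1
  have hn01 : E 0 1 ∈ Q.support := by
    rw [MvPolynomial.mem_support_iff]
    intro h; rw [h, mul_zero] at h1; exact zero_ne_one h1
  by_contra hcon
  push_neg at hcon
  obtain ⟨m₂, hm₂S, hm₂0⟩ := hcon
  have hm₂0' : 2 ≤ m₂ 0 := hm₂0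
  -- m₂ 1 ≠ 0
  have hm₂1 : m₂ 1 ≠ 0 := by
    intro h
    have : coeff (E (m₂ 0) 0) P = 0 := hR0 _ hm₂0'
    rw [← eq_E rfl h] at this
    exact (MvPolynomial.mem_support_iff.mp hm₂S) this
  set SP' := P.support.filter (fun m => m 1 ≠ 0) with hSP'
  have hm₂' : m₂ ∈ SP' := by
    rw [hSP', Finset.mem_filter]; exact ⟨hm₂S, hm₂1⟩
  obtain ⟨mb, hmbS', hmax⟩ := SP'.exists_max_image
    (fun m => ((m 0 : ℚ) - 1) / (m 1 : ℚ)) ⟨m₂, hm₂'⟩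
  obtain ⟨hmbS, hmb1⟩ := Finset.mem_filter.mp hmbS'
  set A := mb 0 with hAdef
  set B := mb 1 with hBdef
  have hB1 : 1 ≤ B := Nat.one_le_iff_ne_zero.mpr hmb1
  -- A ≥ 2
  have hA2 : 2 ≤ A := by
    have hden2 : (0 : ℚ) < (m₂ 1 : ℚ) := by
      exact_mod_cast Nat.pos_of_ne_zero hm₂1
    have hnum2 : (0 : ℚ) < (m₂ 0 : ℚ) - 1 := by
      have : (2 : ℚ) ≤ (m₂ 0 : ℚ) := by exact_mod_cast hm₂0'
      linarith only [this]
    have h2 : (0 : ℚ) < ((m₂ 0 : ℚ) - 1) / (m₂ 1 : ℚ) := div_pos hnum2 hden2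
    have h3 := hmax m₂ hm₂'
    have h4 : (0 : ℚ) < ((A : ℚ) - 1) / (B : ℚ) := lt_of_lt_of_le h2 h3
    have hdenB : (0 : ℚ) < (B : ℚ) := by exact_mod_cast hB1
    rcases div_pos_iff.mp h4 with ⟨hnum, _⟩ | ⟨_, hden⟩
    · have h5 : (1 : ℚ) < (A : ℚ) := by linarith only [hnum]
      have : 1 < A := by exact_mod_cast h5
      omega
    · linarith only [hden, hdenB]
  -- the key upper bound for the weight on the support of P
  have KP : ∀ m ∈ P.support, Wt A B m ≤ (B : ℤ) := by
    intro m hm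
    by_cases hm1 : m 1 = 0
    · have hm0le : m 0 ≤ 1 := by
        by_contra hge
        have : coeff (E (m 0) 0) P = 0 := hR0 _ (by omega)
        rw [← eq_E rfl hm1] at this
        exact (MvPolynomial.mem_support_iff.mp hm) this
      rw [Wt, hm1]
      have h' : (B : ℤ) * (m 0 : ℤ) ≤ (B : ℤ) * 1 :=
        mul_le_mul_of_nonneg_left (by exact_mod_cast hm0le) (by positivity)
      push_cast
      linarith only [h']
    · have hmem : m ∈ SP' := by rw [hSP', Finset.mem_filter]; exact ⟨hm, hm1⟩
      have hq := hmax m hmem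
      have hdm : (0 : ℚ) < (m 1 : ℚ) := by exact_mod_cast Nat.pos_of_ne_zero hm1
      have hdB : (0 : ℚ) < (B : ℚ) := by exact_mod_cast hB1
      rw [div_le_div_iff₀ hdm hdB] at hq
      -- ((m 0) - 1) * B ≤ ((A) - 1) * (m 1)  in ℚ
      have hq' : (m 0 : ℚ) * B + m 1 ≤ B + A * m 1 := by linarith only [hq]
      have hz : (m 0 : ℤ) * B + m 1 ≤ B + A * m 1 := by exact_mod_cast hq'
      rw [Wt]
      linarith only [hz]
  -- max of weight over support of Q
  obtain ⟨nmax, hnmaxS, hnmax⟩ := Q.support.exists_max_image (Wt A B) ⟨E 0 1, hn01⟩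
  set Lset := Q.support.filter (fun n => Wt A B n = Wt A B nmax) with hLset
  obtain ⟨nd, hndL, hndmin⟩ := Lset.exists_min_image (fun n => n 1)
    ⟨nmax, by rw [hLset, Finset.mem_filter]; exact ⟨hnmaxS, rfl⟩⟩
  obtain ⟨hndS, hndW⟩ := Finset.mem_filter.mp hndL
  have hnd1odd : nd 1 % 2 = 1 := hQodd hQ nd hndS
  by_cases hd1 : nd 1 = 1
  · -- Case B
    have hnd0 : nd 0 = 0 := by
      by_contra hne
      have : coeff (E (nd 0) 1) Q = 0 := hR1 _ (by omega)
      rw [← eq_E rfl hd1] at this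
      exact (MvPolynomial.mem_support_iff.mp hndS) this
    have hndE : nd = E 0 1 := eq_E hnd0 hd1
    obtain ⟨ns, hnsL, hnsmax⟩ := Lset.exists_max_image (fun n => n 1) ⟨nd, hndL⟩
    obtain ⟨hnsS, hnsW⟩ := Finset.mem_filter.mp hnsL
    set PL := P.support.filter (fun m => Wt A B m = (B : ℤ)) with hPL
    have hmbPL : mb ∈ PL := by
      rw [hPL, Finset.mem_filter]
      refine ⟨hmbS, ?_⟩
      rw [Wt, ← hAdef, ← hBdef]
      ring
    obtain ⟨ms, hmsPL, hmsmax⟩ := PL.exists_max_image (fun m => m 1) ⟨mb, hmbPL⟩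
    obtain ⟨hmsS, hmsW⟩ := Finset.mem_filter.mp hmsPL
    have hbs : B ≤ ms 1 := hmsmax mb hmbPL
    have hbs1 : 1 ≤ ms 1 := le_trans hB1 hbs
    have hds1 : 1 ≤ ns 1 := by
      have := hQodd hQ ns hnsS; omega
    have has1 : 1 ≤ ms 0 := by
      by_contra h
      have h0 : ms 0 = 0 := by omega
      rw [Wt, h0] at hmsW
      push_cast at hmsW
      have h1' : (1 : ℤ) ≤ ms 1 := by exact_mod_cast hbs1
      have h2' : (2 : ℤ) ≤ A := by exact_mod_cast hA2
      have h3' : (1 : ℤ) ≤ B := by exact_mod_cast hB1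
      have hle : (1 - (A : ℤ)) * (ms 1 : ℤ) ≤ (1 - (A : ℤ)) * 1 :=
        mul_le_mul_of_nonpos_left h1' (by linarith only [h2'])
      linarith only [hmsW, hle, h2', h3']
    -- the key coefficient identity
    have key := jac_coeff_single' P Q (E (ms 0 + ns 0 - 1) (ms 1 + ns 1 - 1)) ms ns
      (by rw [finsupp_eq_iff]; constructor <;> simp <;> omega)
      (by
        intro m hm n hn hc
        obtain ⟨hc0, hc1⟩ := addeq_nat hc
        simp only [E_apply0, E_apply1] at hc0 hc1
        have hc0' : m 0 + n 0 = ms 0 + ns 0 := by omega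
        have hc1' : m 1 + n 1 = ms 1 + ns 1 := by omega
        have e0 : (m 0 : ℤ) + (n 0 : ℤ) = (ms 0 : ℤ) + (ns 0 : ℤ) := by exact_mod_cast hc0'
        have e1 : (m 1 : ℤ) + (n 1 : ℤ) = (ms 1 : ℤ) + (ns 1 : ℤ) := by exact_mod_cast hc1'
        have hWsum : Wt A B m + Wt A B n = Wt A B ms + Wt A B ns := by
          simp only [Wt]
          linear_combination (B : ℤ) * e0 + (1 - (A : ℤ)) * e1
        have hWm := KP m hm
        have hWn := hnmax n hn
        have hWnns : Wt A B ns = Wt A B nmax := hnsW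
        have hWmeq : Wt A B m = (B : ℤ) := by
          rw [hmsW, hWnns] at hWsum; linarith only [hWsum, hWm, hWn]
        have hWneq : Wt A B n = Wt A B nmax := by
          rw [hmsW, hWnns] at hWsum; linarith only [hWsum, hWm, hWn]
        have hmPL : m ∈ PL := by rw [hPL, Finset.mem_filter]; exact ⟨hm, hWmeq⟩
        have hnL : n ∈ Lset := by rw [hLset, Finset.mem_filter]; exact ⟨hn, hWneq⟩
        have hm1le : m 1 ≤ ms 1 := hmsmax m hmPL
        have hn1le : n 1 ≤ ns 1 := hnsmax n hnL
        have hm1eq : m 1 = ms 1 := by omega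
        have hn1eq : n 1 = ns 1 := by omega
        -- deduce first components
        have hm0eq : m 0 = ms 0 := by
          have hWms' : Wt A B ms = (B : ℤ) := hmsW
          simp only [Wt] at hWmeq hWms'
          have em1 : (m 1 : ℤ) = (ms 1 : ℤ) := by exact_mod_cast hm1eq
          have : (B : ℤ) * (m 0) = (B : ℤ) * (ms 0) := by
            linear_combination hWmeq - hWms' + ((A : ℤ) - 1) * em1
          have hBne : (B : ℤ) ≠ 0 := by positivity
          have := mul_left_cancel₀ hBne this
          exact_mod_cast this
        have hn0eq : n 0 = ns 0 := by
          have hWn' : Wt A B n = Wt A B ns := by rw [hWneq, hWnns]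
          simp only [Wt] at hWn'
          have en1 : (n 1 : ℤ) = (ns 1 : ℤ) := by exact_mod_cast hn1eq
          have : (B : ℤ) * (n 0) = (B : ℤ) * (ns 0) := by
            linear_combination hWn' + ((A : ℤ) - 1) * en1
          have hBne : (B : ℤ) ≠ 0 := by positivity
          have := mul_left_cancel₀ hBne this
          exact_mod_cast this
        exact Or.inl ⟨(finsupp_eq_iff _ _).mpr ⟨hm0eq, hm1eq⟩,
          (finsupp_eq_iff _ _).mpr ⟨hn0eq, hn1eq⟩⟩)
    rw [hJ, coeff_one] at key
    have hune : (0 : Fin 2 →₀ ℕ) ≠ E (ms 0 + ns 0 - 1) (ms 1 + ns 1 - 1) := by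
      intro h
      have := (finsupp_eq_iff _ _).mp h
      simp at this
      omega
    rw [if_neg hune] at key
    have hmsne : coeff ms P ≠ 0 := MvPolynomial.mem_support_iff.mp hmsS
    have hnsne : coeff ns Q ≠ 0 := MvPolynomial.mem_support_iff.mp hnsS
    have hdet0 : detK ms ns = (0 : K) := by
      rcases mul_eq_zero.mp key.symm with h | h
      · rcases mul_eq_zero.mp h with h' | h'
        · exact absurd h' hmsne
        · exact absurd h' hnsne
      · exact h
    have hdetnat : ms 0 * ns 1 = ms 1 * ns 0 := by
      rw [detK, sub_eq_zero] at hdet0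
      exact_mod_cast hdet0
    -- lattice analysis
    have hWnsE : Wt A B ns = Wt A B (E 0 1) := by rw [← hndE, hnsW, hndW]
    have hWE01 : Wt A B (E 0 1) = 1 - (A : ℤ) := by rw [Wt]; simp
    have hz1 : (B : ℤ) * ((ms 0 : ℤ) - 1) = ((A : ℤ) - 1) * (ms 1 : ℤ) := by
      rw [Wt] at hmsW; linear_combination hmsW
    have hz2 : (B : ℤ) * (ns 0 : ℤ) = ((A : ℤ) - 1) * ((ns 1 : ℤ) - 1) := by
      rw [hWE01] at hWnsE; rw [Wt] at hWnsE; linear_combination hWnsE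
    have hn1' : B * (ms 0 - 1) = (A - 1) * ms 1 := by
      have e1 : ((ms 0 : ℤ) - 1) = ((ms 0 - 1 : ℕ) : ℤ) := by omega
      have e2 : ((A : ℤ) - 1) = ((A - 1 : ℕ) : ℤ) := by omega
      rw [e1, e2] at hz1
      exact_mod_cast hz1
    have hn2' : B * ns 0 = (A - 1) * (ns 1 - 1) := by
      have e2 : ((A : ℤ) - 1) = ((A - 1 : ℕ) : ℤ) := by omega
      have e3 : ((ns 1 : ℤ) - 1) = ((ns 1 - 1 : ℕ) : ℤ) := by omega
      rw [e2, e3] at hz2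
      exact_mod_cast hz2
    set g := Nat.gcd (A - 1) B with hgdef
    have hgpos : 0 < g := Nat.gcd_pos_of_pos_right _ (by omega)
    set u₀ := (A - 1) / g with hu₀def
    set v₀ := B / g with hv₀def
    have hu₀ : u₀ * g = A - 1 := Nat.div_mul_cancel (Nat.gcd_dvd_left _ _)
    have hv₀ : v₀ * g = B := Nat.div_mul_cancel (Nat.gcd_dvd_right _ _)
    have hco : Nat.Coprime u₀ v₀ := Nat.coprime_div_gcd_div_gcd hgpos
    have hu₀pos : 0 < u₀ := by
      rcases Nat.eq_zero_or_pos u₀ with h | h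
      · rw [h, zero_mul] at hu₀; omega
      · exact h
    have hv₀pos : 0 < v₀ := by
      rcases Nat.eq_zero_or_pos v₀ with h | h
      · rw [h, zero_mul] at hv₀; omega
      · exact h
    have heq1 : v₀ * (ms 0 - 1) = u₀ * ms 1 := by
      have : v₀ * (ms 0 - 1) * g = u₀ * ms 1 * g := by
        calc v₀ * (ms 0 - 1) * g = (v₀ * g) * (ms 0 - 1) := by ring
        _ = B * (ms 0 - 1) := by rw [hv₀]
        _ = (A - 1) * ms 1 := hn1'
        _ = (u₀ * g) * ms 1 := by rw [hu₀]
        _ = u₀ * ms 1 * g := by ring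
      exact Nat.eq_of_mul_eq_mul_right hgpos this
    have heq2 : v₀ * ns 0 = u₀ * (ns 1 - 1) := by
      have : v₀ * ns 0 * g = u₀ * (ns 1 - 1) * g := by
        calc v₀ * ns 0 * g = (v₀ * g) * ns 0 := by ring
        _ = B * ns 0 := by rw [hv₀]
        _ = (A - 1) * (ns 1 - 1) := hn2'
        _ = (u₀ * g) * (ns 1 - 1) := by rw [hu₀]
        _ = u₀ * (ns 1 - 1) * g := by ring
      exact Nat.eq_of_mul_eq_mul_right hgpos this
    have hdvd1 : v₀ ∣ ms 1 :=
      (hco.symm).dvd_of_dvd_mul_left ⟨ms 0 - 1, heq1.symm⟩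
    obtain ⟨t, ht⟩ := hdvd1
    have hms0 : ms 0 - 1 = u₀ * t := by
      have : v₀ * (ms 0 - 1) = v₀ * (u₀ * t) := by
        rw [heq1, ht]; ring
      exact Nat.eq_of_mul_eq_mul_left hv₀pos this
    have hdvd2 : u₀ ∣ ns 0 :=
      hco.dvd_of_dvd_mul_left ⟨ns 1 - 1, heq2⟩
    obtain ⟨t', ht'⟩ := hdvd2
    have hns1 : ns 1 - 1 = v₀ * t' := by
      have : u₀ * (ns 1 - 1) = u₀ * (v₀ * t') := by
        rw [← heq2, ht']; ring
      exact Nat.eq_of_mul_eq_mul_left hu₀pos this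
    -- final contradiction
    have hms0' : ms 0 = 1 + u₀ * t := by omega
    have hns1' : ns 1 = 1 + v₀ * t' := by omega
    have h2 : ms 1 * ns 0 = (u₀ * t) * (v₀ * t') := by rw [ht, ht']; ring
    have h3 : ms 0 * ns 1 = (1 + u₀ * t) * (1 + v₀ * t') := by rw [hms0', hns1']
    have hfin : (1 + u₀ * t) * (1 + v₀ * t') = (u₀ * t) * (v₀ * t') := by
      rw [← h3, ← h2]; exact hdetnat
    have hZfin : (1 + ((u₀ * t : ℕ) : ℤ)) * (1 + ((v₀ * t' : ℕ) : ℤ))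
        = ((u₀ * t : ℕ) : ℤ) * ((v₀ * t' : ℕ) : ℤ) := by exact_mod_cast hfin
    have hcontra : (1 : ℤ) + ((u₀ * t : ℕ) : ℤ) + ((v₀ * t' : ℕ) : ℤ) = 0 := by
      linear_combination hZfin
    omega
  · -- Case A : nd 1 ≥ 2
    have hd2 : 2 ≤ nd 1 := by omega
    have key := jac_coeff_single' P Q (E (nd 0) (nd 1 - 1)) (E 1 0) nd
      (by rw [finsupp_eq_iff]; constructor <;> simp <;> omega)
      (by
        intro m hm n hn hc
        obtain ⟨hc0, hc1⟩ := addeq_nat hc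
        simp only [E_apply0, E_apply1] at hc0 hc1
        have hc0' : m 0 + n 0 = nd 0 + 1 := by omega
        have hc1' : m 1 + n 1 = nd 1 := by omega
        have e0 : (m 0 : ℤ) + (n 0 : ℤ) = (nd 0 : ℤ) + 1 := by exact_mod_cast hc0'
        have e1 : (m 1 : ℤ) + (n 1 : ℤ) = (nd 1 : ℤ) := by exact_mod_cast hc1'
        have hWsum : Wt A B m + Wt A B n = Wt A B (E 1 0) + Wt A B nd := by
          simp only [Wt, E_apply0, E_apply1]
          push_cast
          linear_combination (B : ℤ) * e0 + (1 - (A : ℤ)) * e1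
        have hWE10 : Wt A B (E 1 0) = (B : ℤ) := by rw [Wt]; simp
        have hWm := KP m hm
        have hWn := hnmax n hn
        have hWmeq : Wt A B m = (B : ℤ) := by
          rw [hWE10, hndW] at hWsum; linarith only [hWsum, hWm, hWn]
        have hWneq : Wt A B n = Wt A B nmax := by
          rw [hWE10, hndW] at hWsum; linarith only [hWsum, hWm, hWn]
        have hnL : n ∈ Lset := by rw [hLset, Finset.mem_filter]; exact ⟨hn, hWneq⟩
        have hn1ge : nd 1 ≤ n 1 := hndmin n hnL
        have hm1eq : m 1 = 0 := by omega
        have hn1eq : n 1 = nd 1 := by omega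
        have hm0eq : m 0 = 1 := by
          rw [Wt, hm1eq] at hWmeq
          push_cast at hWmeq
          have : (B : ℤ) * (m 0) = (B : ℤ) * 1 := by linarith only [hWmeq]
          have hBne : (B : ℤ) ≠ 0 := by positivity
          have := mul_left_cancel₀ hBne this
          exact_mod_cast this
        have hn0eq : n 0 = nd 0 := by
          rw [Wt] at hWneq hndW
          have : (B : ℤ) * (n 0) = (B : ℤ) * (nd 0) := by
            have en1 : (n 1 : ℤ) = (nd 1 : ℤ) := by exact_mod_cast hn1eq
            linear_combination hWneq - hndW + ((A : ℤ) - 1) * en1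
          have hBne : (B : ℤ) ≠ 0 := by positivity
          have := mul_left_cancel₀ hBne this
          exact_mod_cast this
        exact Or.inl ⟨eq_E hm0eq hm1eq, (finsupp_eq_iff _ _).mpr ⟨hn0eq, hn1eq⟩⟩)
    rw [hJ, coeff_one] at key
    have hune : (0 : Fin 2 →₀ ℕ) ≠ E (nd 0) (nd 1 - 1) := by
      intro h
      have := (finsupp_eq_iff _ _).mp h
      simp at this
      omega
    rw [if_neg hune] at key
    have hp10 : coeff (E 1 0) P ≠ 0 := MvPolynomial.mem_support_iff.mp hm10
    have hndne : coeff nd Q ≠ 0 := MvPolynomial.mem_support_iff.mp hndS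
    have hdetne : detK (E 1 0) nd ≠ (0 : K) := by
      rw [detK]
      simp only [E_apply0, E_apply1, one_mul, zero_mul, Nat.cast_zero, sub_zero]
      exact Nat.cast_ne_zero.mpr (by omega)
    exact (mul_ne_zero (mul_ne_zero hp10 hndne) hdetne) key.symm

end Chunk6
section Chunk7
open Stmt15Aux
variable {K : Type*} [Field K] [CharZero K] {P Q : MvPolynomial (Fin 2) K}

/-- Step 4 : `Q` does not involve `X`. -/
lemma step4 (hJ : Jac K P Q = 1) (hP : polyBeta K P = P) (hQ : polyBeta K Q = -Q) :
    ∀ n ∈ Q.support, n 0 = 0 := by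
  have h1 := step1 hJ hP hQ
  have hstep3 := step3 hJ hP hQ
  have hm10 : E 1 0 ∈ P.support := by
    rw [MvPolynomial.mem_support_iff]
    intro h; rw [h, zero_mul] at h1; exact zero_ne_one h1
  by_contra hcon
  push_neg at hcon
  obtain ⟨n₂, hn₂S, hn₂0⟩ := hcon
  set SM := Q.support.image (fun n => n 0) with hSM
  have hSMne : SM.Nonempty := ⟨n₂ 0, by rw [hSM, Finset.mem_image]; exact ⟨n₂, hn₂S, rfl⟩⟩
  set M := SM.max' hSMne with hM
  have hM1 : 1 ≤ M := by
    have : n₂ 0 ≤ M := Finset.le_max' _ _ (by rw [hSM, Finset.mem_image]; exact ⟨n₂, hn₂S, rfl⟩)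
    omega
  have hMub : ∀ n ∈ Q.support, n 0 ≤ M := by
    intro n hn
    exact Finset.le_max' _ _ (by rw [hSM, Finset.mem_image]; exact ⟨n, hn, rfl⟩)
  have hMmem : ∃ n₃ ∈ Q.support, n₃ 0 = M := by
    obtain ⟨n₃, hn₃, h3⟩ := Finset.mem_image.mp (SM.max'_mem hSMne)
    exact ⟨n₃, hn₃, h3⟩
  obtain ⟨n₃, hn₃S, hn₃0⟩ := hMmem
  obtain ⟨nv, hnvF, hnvmin⟩ := (Q.support.filter (fun n => n 0 = M)).exists_min_image
    (fun n => n 1) ⟨n₃, Finset.mem_filter.mpr ⟨hn₃S, hn₃0⟩⟩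
  obtain ⟨hnvS, hnv0⟩ := Finset.mem_filter.mp hnvF
  have hnv1odd : nv 1 % 2 = 1 := hQodd hQ nv hnvS
  have key := jac_coeff_single' P Q (E M (nv 1 - 1)) (E 1 0) nv
    (by rw [finsupp_eq_iff]; constructor <;> simp <;> omega)
    (by
      intro m hm n hn hc
      obtain ⟨hc0, hc1⟩ := addeq_nat hc
      simp only [E_apply0, E_apply1] at hc0 hc1
      have hm0le := hstep3 m hm
      have hn0le := hMub n hn
      have hm0 : m 0 = 1 := by omega
      have hn0 : n 0 = M := by omega
      have hnF : n ∈ Q.support.filter (fun n => n 0 = M) := Finset.mem_filter.mpr ⟨hn, hn0⟩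
      have hn1ge : nv 1 ≤ n 1 := hnvmin n hnF
      have hm1 : m 1 = 0 := by omega
      have hn1 : n 1 = nv 1 := by omega
      exact Or.inl ⟨eq_E hm0 hm1, (finsupp_eq_iff _ _).mpr ⟨by omega, hn1⟩⟩)
  rw [hJ, coeff_one] at key
  have hune : (0 : Fin 2 →₀ ℕ) ≠ E M (nv 1 - 1) := by
    intro h
    have := (finsupp_eq_iff _ _).mp h
    simp at this
    omega
  rw [if_neg hune] at key
  have hp10 : coeff (E 1 0) P ≠ 0 := MvPolynomial.mem_support_iff.mp hm10
  have hnvne : coeff nv Q ≠ 0 := MvPolynomial.mem_support_iff.mp hnvS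
  have hdetne : detK (E 1 0) nv ≠ (0 : K) := by
    rw [detK]
    simp only [E_apply0, E_apply1, one_mul, zero_mul, Nat.cast_zero, sub_zero]
    exact Nat.cast_ne_zero.mpr (by omega)
  exact (mul_ne_zero (mul_ne_zero hp10 hnvne) hdetne) key.symm

/-- Step 5 : the remaining coefficients vanish. -/
lemma step5 (hJ : Jac K P Q = 1) (hP : polyBeta K P = P) (hQ : polyBeta K Q = -Q) :
    (∀ b, 1 ≤ b → coeff (E 1 b) P = 0) ∧ (∀ d, 2 ≤ d → coeff (E 0 d) Q = 0) := by
  have h1 := step1 hJ hP hQ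
  have hstep3 := step3 hJ hP hQ
  have hstep4 := step4 hJ hP hQ
  have hm10 : E 1 0 ∈ P.support := by
    rw [MvPolynomial.mem_support_iff]
    intro h; rw [h, zero_mul] at h1; exact zero_ne_one h1
  have hn01 : E 0 1 ∈ Q.support := by
    rw [MvPolynomial.mem_support_iff]
    intro h; rw [h, mul_zero] at h1; exact zero_ne_one h1
  set SBp := (P.support.filter (fun m => m 0 = 1)).image (fun m => m 1) with hSBp
  have hSBpmem : (0 : ℕ) ∈ SBp := by
    rw [hSBp, Finset.mem_image]
    exact ⟨E 1 0, Finset.mem_filter.mpr ⟨hm10, by simp⟩, by simp⟩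
  have hSBpne : SBp.Nonempty := ⟨0, hSBpmem⟩
  set B' := SBp.max' hSBpne with hB'
  have hB'ub : ∀ m ∈ P.support, m 0 = 1 → m 1 ≤ B' := by
    intro m hm hm0
    refine Finset.le_max' SBp _ ?_
    rw [hSBp, Finset.mem_image]
    exact ⟨m, Finset.mem_filter.mpr ⟨hm, hm0⟩, rfl⟩
  have hB'mem : E 1 B' ∈ P.support := by
    obtain ⟨m, hm, hm1⟩ := Finset.mem_image.mp (SBp.max'_mem hSBpne)
    obtain ⟨hms, hm0⟩ := Finset.mem_filter.mp hm
    rwa [← eq_E hm0 hm1]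
  set SD := Q.support.image (fun n => n 1) with hSD
  have hSDmem : (1 : ℕ) ∈ SD := by
    rw [hSD, Finset.mem_image]; exact ⟨E 0 1, hn01, by simp⟩
  have hSDne : SD.Nonempty := ⟨1, hSDmem⟩
  set D := SD.max' hSDne with hD
  have hD1 : 1 ≤ D := Finset.le_max' _ 1 hSDmem
  have hDub : ∀ n ∈ Q.support, n 1 ≤ D := by
    intro n hn
    refine Finset.le_max' SD _ ?_
    rw [hSD, Finset.mem_image]
    exact ⟨n, hn, rfl⟩
  have hDmem : E 0 D ∈ Q.support := by
    obtain ⟨n, hn, hn1⟩ := Finset.mem_image.mp (SD.max'_mem hSDne)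
    rwa [← eq_E (hstep4 n hn) hn1]
  have key := jac_coeff_single' P Q (E 0 (B' + D - 1)) (E 1 B') (E 0 D)
    (by rw [finsupp_eq_iff]; constructor <;> simp <;> omega)
    (by
      intro m hm n hn hc
      obtain ⟨hc0, hc1⟩ := addeq_nat hc
      simp only [E_apply0, E_apply1] at hc0 hc1
      have hn0 : n 0 = 0 := hstep4 n hn
      have hm0le := hstep3 m hm
      have hm0 : m 0 = 1 := by omega
      have hm1le := hB'ub m hm hm0
      have hn1le := hDub n hn
      have hm1 : m 1 = B' := by omega
      have hn1 : n 1 = D := by omega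
      exact Or.inl ⟨eq_E hm0 hm1, eq_E hn0 hn1⟩)
  rw [hJ, coeff_one] at key
  have hdetval : detK (E 1 B') (E 0 D) = ((D : ℕ) : K) := by
    rw [detK]
    simp
  rw [hdetval] at key
  have hBD : B' + D - 1 = 0 := by
    by_contra hne
    have hune : (0 : Fin 2 →₀ ℕ) ≠ E 0 (B' + D - 1) := by
      intro h
      have := (finsupp_eq_iff _ _).mp h
      simp at this
      omega
    rw [if_neg hune] at key
    have hB'ne : coeff (E 1 B') P ≠ 0 := MvPolynomial.mem_support_iff.mp hB'mem
    have hDne : coeff (E 0 D) Q ≠ 0 := MvPolynomial.mem_support_iff.mp hDmem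
    have : ((D : ℕ) : K) ≠ 0 := Nat.cast_ne_zero.mpr (by omega)
    exact (mul_ne_zero (mul_ne_zero hB'ne hDne) this) key.symm
  have hB'0 : B' = 0 := by omega
  have hDeq : D = 1 := by omega
  constructor
  · intro b hb
    by_contra hne
    have : b ≤ B' := by
      refine Finset.le_max' SBp _ ?_
      rw [hSBp, Finset.mem_image]
      exact ⟨E 1 b, Finset.mem_filter.mpr ⟨MvPolynomial.mem_support_iff.mpr hne, by simp⟩, by simp⟩
    omega
  · intro d hd
    by_contra hne
    have : d ≤ D := by
      refine Finset.le_max' SD _ ?_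
      rw [hSD, Finset.mem_image]
      exact ⟨E 0 d, MvPolynomial.mem_support_iff.mpr hne, by simp⟩
    omega

end Chunk7
open Stmt15Aux
theorem stmt_15 [CharZero K] (P Q : MvPolynomial (Fin 2) K)
    (hJ : Jac K P Q = 1) (hP : polyBeta K P = P) (hQ : polyBeta K Q = -Q) :
    ∃ (lam : K) (_ : lam ≠ 0) (g : Polynomial K),
      Q = C lam * X 1 ∧
      P = C lam⁻¹ * X 0 + Polynomial.aeval ((X 1 : MvPolynomial (Fin 2) K) ^ 2) g := by
  have h1 := step1 hJ hP hQ
  have hm10 : E 1 0 ∈ P.support := by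
    rw [MvPolynomial.mem_support_iff]
    intro h; rw [h, zero_mul] at h1; exact zero_ne_one h1
  have hn01 : E 0 1 ∈ Q.support := by
    rw [MvPolynomial.mem_support_iff]
    intro h; rw [h, mul_zero] at h1; exact zero_ne_one h1
  set lam := coeff (E 0 1) Q with hlam
  have hlamne : lam ≠ 0 := by
    intro h; rw [h, mul_zero] at h1; exact zero_ne_one h1
  have hp10 : coeff (E 1 0) P = lam⁻¹ := eq_inv_of_mul_eq_one_left h1
  obtain ⟨hS5a, hS5b⟩ := step5 hJ hP hQ
  have hstep3 := step3 hJ hP hQ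
  have hstep4 := step4 hJ hP hQ
  have hne10 : (1 : Fin 2) ≠ 0 := by decide
  have hne01 : (0 : Fin 2) ≠ 1 := by decide
  -- support of Q
  have hQsupp : Q.support = {E 0 1} := by
    apply Finset.eq_singleton_iff_unique_mem.mpr
    refine ⟨hn01, ?_⟩
    intro n hn
    have hn0 : n 0 = 0 := hstep4 n hn
    have hodd : n 1 % 2 = 1 := hQodd hQ n hn
    have hn1 : n 1 = 1 := by
      by_contra h
      have h2 : 2 ≤ n 1 := by omega
      have hz := hS5b (n 1) h2
      rw [← eq_E hn0 rfl] at hz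
      exact (MvPolynomial.mem_support_iff.mp hn) hz
    exact eq_E hn0 hn1
  have hE01 : E 0 1 = Finsupp.single (1 : Fin 2) 1 := by
    rw [finsupp_eq_iff]
    simp [Finsupp.single_apply, Finsupp.single_eq_of_ne hne10]
  have hE10 : E 1 0 = Finsupp.single (0 : Fin 2) 1 := by
    rw [finsupp_eq_iff]
    simp [Finsupp.single_apply, Finsupp.single_eq_of_ne hne01]
  have hQeq : Q = C lam * X 1 := by
    conv_lhs => rw [Q.as_sum, hQsupp, Finset.sum_singleton]
    rw [C_mul_X_eq_monomial, ← hE01, ← hlam]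
  -- the polynomial g
  set g : Polynomial K := ∑ m ∈ P.support.filter (fun m => m 0 = 0),
      Polynomial.monomial (m 1 / 2) (coeff m P) with hg
  have hfilter1 : P.support.filter (fun m => ¬ (m 0 = 0)) = {E 1 0} := by
    apply Finset.eq_singleton_iff_unique_mem.mpr
    constructor
    · exact Finset.mem_filter.mpr ⟨hm10, by simp⟩
    · intro m hm
      obtain ⟨hmS, hm0ne⟩ := Finset.mem_filter.mp hm
      have hm0 : m 0 = 1 := by have := hstep3 m hmS; omega
      have hm1 : m 1 = 0 := by
        by_contra h
        have hz := hS5a (m 1) (by omega)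
        rw [← eq_E hm0 rfl] at hz
        exact (MvPolynomial.mem_support_iff.mp hmS) hz
      exact eq_E hm0 hm1
  have hsplit : P = (∑ m ∈ P.support.filter (fun m => m 0 = 0), monomial m (coeff m P)) +
      (∑ m ∈ P.support.filter (fun m => ¬ (m 0 = 0)), monomial m (coeff m P)) := by
    conv_lhs => rw [P.as_sum]
    exact (Finset.sum_filter_add_sum_filter_not P.support _ _).symm
  have hxpart : (∑ m ∈ P.support.filter (fun m => ¬ (m 0 = 0)), monomial m (coeff m P))
      = C lam⁻¹ * X 0 := by
    rw [hfilter1, Finset.sum_singleton, hp10, C_mul_X_eq_monomial, ← hE10]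
  have hevpart : (∑ m ∈ P.support.filter (fun m => m 0 = 0), monomial m (coeff m P))
      = Polynomial.aeval ((X 1 : MvPolynomial (Fin 2) K) ^ 2) g := by
    rw [hg, map_sum]
    refine Finset.sum_congr rfl ?_
    intro m hm
    obtain ⟨hmS, hm0⟩ := Finset.mem_filter.mp hm
    have hmev : m 1 % 2 = 0 := hPev hP m hmS
    rw [Polynomial.aeval_monomial, ← pow_mul]
    have h2 : 2 * (m 1 / 2) = m 1 := by omega
    rw [h2]
    rw [show (algebraMap K (MvPolynomial (Fin 2) K)) (coeff m P) = C (coeff m P) from rfl]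
    rw [C_mul_X_pow_eq_monomial]
    have hmE : m = Finsupp.single (1 : Fin 2) (m 1) := by
      rw [finsupp_eq_iff]
      constructor
      · rw [hm0, Finsupp.single_eq_of_ne' hne10]
      · rw [Finsupp.single_eq_same]
    rw [← hmE]
  refine ⟨lam, hlamne, g, hQeq, ?_⟩
  rw [hsplit, hxpart, hevpart, add_comm]
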